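/- arXiv:math/0012238 — 2 statements merged into one kernel-verified Lean document; each statement's English description precedes it below -/
import Mathlib

section
/- Let v, w ∈ ℍ with v ≠ 0. Then there exists N ∈ ℍ with N² = −1 and w = N·v if and only if ‖w‖ = ‖v‖ and ⟨v,w⟩ = 0. Moreover, in this case N = w·v⁻¹ is the unique such quaternion, N is purely imaginary of norm one, and R := v⁻¹·w is the unique quaternion satisfying R² = −1 and w = v·R. (This is the pointwise content of the statement that a map f into ℍ = ℝ⁴ with nonvanishing differential satisfies *df = N df for some N with N² = −1 exactly when f is conformal, and that N is then uniquely determined.) -/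
open Quaternion

lemma re_mul_comm (a b : Quaternion ℝ) : (a * b).re = (b * a).re := by
  simp [Quaternion.re_mul]; ring

lemma sq_eq_neg_one_iff (N : Quaternion ℝ) : N ^ 2 = -1 ↔ N.re = 0 ∧ ‖N‖ = 1 := by
  constructor
  · intro h
    have hns : normSq N * normSq N = 1 := by
      have := congrArg normSq h
      simpa [sq, mul_comm] using this
    have hn0 : (0:ℝ) ≤ normSq N := Quaternion.normSq_nonneg (a:=N)
    have h1 : normSq N = 1 := by nlinarith
    refine ⟨?_, ?_⟩
    · rw [← Quaternion.sq_eq_neg_normSq, h1]; simpa using h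
    · have := Quaternion.normSq_eq_norm_mul_self N
      nlinarith [norm_nonneg N]
  · rintro ⟨hre, hn⟩
    have h1 : normSq N = 1 := by
      rw [Quaternion.normSq_eq_norm_mul_self, hn]; ring
    have := (Quaternion.sq_eq_neg_normSq (a := N)).2 hre
    rw [h1] at this; simpa using this

/-- Pointwise conformality: for `v ≠ 0` there exists `N` with `N² = -1` and `w = N v`
iff `‖w‖ = ‖v‖` and `⟨v, w⟩ = 0`; in that case `N = w v⁻¹` is the unique such quaternion,
it is purely imaginary of norm one, and `R = v⁻¹ w` is the unique quaternion with
`R² = -1` and `w = v R`. -/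
theorem quaternion_conformal_iff (v w : Quaternion ℝ) (hv : v ≠ 0) :
    ((∃ N : Quaternion ℝ, N ^ 2 = -1 ∧ w = N * v) ↔
      (‖w‖ = ‖v‖ ∧ (star v * w).re = 0)) ∧
    (‖w‖ = ‖v‖ → (star v * w).re = 0 →
      ((w * v⁻¹) ^ 2 = -1 ∧ w = (w * v⁻¹) * v ∧
        (w * v⁻¹).re = 0 ∧ ‖w * v⁻¹‖ = 1 ∧
        (∀ N : Quaternion ℝ, N ^ 2 = -1 → w = N * v → N = w * v⁻¹) ∧
        (v⁻¹ * w) ^ 2 = -1 ∧ w = v * (v⁻¹ * w) ∧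
        (∀ R : Quaternion ℝ, R ^ 2 = -1 → w = v * R → R = v⁻¹ * w))) := by
  have hvns : normSq v ≠ 0 := by simpa [Quaternion.normSq_eq_zero] using hv
  have hinv : v⁻¹ = (normSq v)⁻¹ • star v := rfl
  have hmain : ‖w‖ = ‖v‖ → (star v * w).re = 0 →
      ((w * v⁻¹) ^ 2 = -1 ∧ w = (w * v⁻¹) * v ∧
        (w * v⁻¹).re = 0 ∧ ‖w * v⁻¹‖ = 1 ∧
        (∀ N : Quaternion ℝ, N ^ 2 = -1 → w = N * v → N = w * v⁻¹) ∧
        (v⁻¹ * w) ^ 2 = -1 ∧ w = v * (v⁻¹ * w) ∧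
        (∀ R : Quaternion ℝ, R ^ 2 = -1 → w = v * R → R = v⁻¹ * w)) := by
    intro hnorm hperp
    have hvn : ‖v‖ ≠ 0 := norm_ne_zero_iff.2 hv
    have hNnorm : ‖w * v⁻¹‖ = 1 := by
      rw [norm_mul, norm_inv, hnorm]; field_simp
    have hRnorm : ‖v⁻¹ * w‖ = 1 := by
      rw [norm_mul, norm_inv, hnorm]; field_simp
    have hNre : (w * v⁻¹).re = 0 := by
      rw [hinv, mul_smul_comm, Quaternion.re_smul, re_mul_comm, hperp, smul_zero]
    have hRre : (v⁻¹ * w).re = 0 := by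
      rw [hinv, smul_mul_assoc, Quaternion.re_smul, hperp, smul_zero]
    have hNsq : (w * v⁻¹) ^ 2 = -1 := (sq_eq_neg_one_iff _).2 ⟨hNre, hNnorm⟩
    have hRsq : (v⁻¹ * w) ^ 2 = -1 := (sq_eq_neg_one_iff _).2 ⟨hRre, hRnorm⟩
    refine ⟨hNsq, by rw [mul_assoc, inv_mul_cancel₀ hv, mul_one], hNre, hNnorm, ?_, hRsq, by rw [← mul_assoc, mul_inv_cancel₀ hv, one_mul], ?_⟩
    · intro N _ hw; rw [hw, mul_assoc, mul_inv_cancel₀ hv, mul_one]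
    · intro R _ hw; rw [hw, ← mul_assoc, inv_mul_cancel₀ hv, one_mul]
  refine ⟨⟨?_, fun ⟨h1, h2⟩ => ⟨w * v⁻¹, (hmain h1 h2).1, (hmain h1 h2).2.1⟩⟩, hmain⟩
  rintro ⟨N, hN, rfl⟩
  obtain ⟨hre, hn⟩ := (sq_eq_neg_one_iff N).1 hN
  constructor
  · rw [norm_mul, hn, one_mul]
  · have : (star v * (N * v)).re = (N * (v * star v)).re := by
      rw [re_mul_comm, mul_assoc]
    rw [this, Quaternion.self_mul_star]
    simp [hre]
end

section
/- Let g, d, n be integers with g ≥ 1, 0 ≤ n, d ≤ n, and n ≤ d + 2g(n+1). Then there exists a natural number k with k ≤ n and 4g(k+1)(n − d − kg) ≥ (n + g − d)² − g². -/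
/-- Existence of a good vanishing order `k`: for integers `g ≥ 1`, `0 ≤ n`, `d ≤ n`,
`n ≤ d + 2g(n+1)`, there is `k ≤ n` with
`4g(k+1)(n - d - kg) ≥ (n + g - d)² - g²`. -/
theorem exists_good_vanishing_order (g d n : ℤ) (hg : 1 ≤ g) (hn : 0 ≤ n)
    (hd : d ≤ n) (hbound : n ≤ d + 2 * g * (n + 1)) :
    ∃ k : ℕ, (k : ℤ) ≤ n ∧
      (n + g - d) ^ 2 - g ^ 2 ≤ 4 * g * ((k : ℤ) + 1) * (n - d - (k : ℤ) * g) := by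
  set m : ℤ := n - d with hm
  have hm0 : 0 ≤ m := by omega
  have h2g : (0:ℤ) < 2 * g := by omega
  set q : ℤ := m / (2 * g) with hq
  have hq0 : 0 ≤ q := Int.ediv_nonneg hm0 (le_of_lt h2g)
  have he1 := Int.emod_nonneg m (ne_of_gt h2g)
  have he2 := Int.emod_lt_of_pos m h2g
  have he3 := Int.mul_ediv_add_emod m (2 * g)
  have hlow : 2 * g * q ≤ m := by rw [hq]; linarith
  have hhigh : m < 2 * g * (q + 1) := by rw [hq]; linarith
  by_cases hqn : q ≤ n
  · refine ⟨q.toNat, ?_, ?_⟩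
    · rwa [Int.toNat_of_nonneg hq0]
    · rw [Int.toNat_of_nonneg hq0]
      nlinarith [hlow, hhigh, hg]
  · -- q ≥ n + 1, so m = 2g(n+1)
    have h1 : n + 1 ≤ q := by omega
    have hmeq : m = 2 * g * (n + 1) := by
      have : 2 * g * (n + 1) ≤ 2 * g * q := by nlinarith
      omega
    refine ⟨n.toNat, ?_, ?_⟩
    · rw [Int.toNat_of_nonneg hn]
    · rw [Int.toNat_of_nonneg hn]
      nlinarith [hmeq, hg, hn]
end
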